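/- No simple 2-(7,3,3) design contains a Fano plane: if D is a set of 21 distinct triples on a 7-set X with every pair of points in exactly 3 triples of D, then no 7 triples of D form a 2-(7,3,1) design. -/

import Mathlib

open Finset in
private lemma design_count (G : Finset (Finset (Fin 7))) (lam : ℕ)
    (h3 : ∀ t ∈ G, t.card = 3)
    (hp : ∀ q : Finset (Fin 7), q.card = 2 → (G.filter (fun t => q ⊆ t)).card = lam) :
    G.card = 7 * lam := by
  have key : ∑ q ∈ (univ : Finset (Fin 7)).powersetCard 2,
      (G.filter (fun t => q ⊆ t)).card = ∑ t ∈ G, 3 := by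
    simp only [card_filter]
    rw [Finset.sum_comm]
    refine Finset.sum_congr rfl fun t ht => ?_
    have : ∑ q ∈ (univ : Finset (Fin 7)).powersetCard 2, (if q ⊆ t then 1 else 0)
        = ((univ : Finset (Fin 7)).powersetCard 2 |>.filter (fun q => q ⊆ t)).card := by
      rw [card_filter]
    rw [this]
    have : ((univ : Finset (Fin 7)).powersetCard 2 |>.filter (fun q => q ⊆ t))
        = t.powersetCard 2 := by
      ext q
      simp [Finset.mem_powersetCard, and_comm]
    rw [this, card_powersetCard, h3 t ht]; decide
  have lhs : ∑ q ∈ (univ : Finset (Fin 7)).powersetCard 2,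
      (G.filter (fun t => q ⊆ t)).card = 21 * lam := by
    rw [Finset.sum_congr rfl fun q hq => hp q (Finset.mem_powersetCard.mp hq).2]
    rw [Finset.sum_const, card_powersetCard]
    simp [Nat.choose]
  rw [lhs, Finset.sum_const, smul_eq_mul] at key
  omega

open Finset in
private lemma design_deg (G : Finset (Finset (Fin 7))) (lam : ℕ)
    (h3 : ∀ t ∈ G, t.card = 3)
    (hp : ∀ q : Finset (Fin 7), q.card = 2 → (G.filter (fun t => q ⊆ t)).card = lam)
    (x : Fin 7) : (G.filter (fun t => x ∈ t)).card = 3 * lam := by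
  have key : ∑ y ∈ (univ : Finset (Fin 7)).erase x,
      (G.filter (fun t => ({x, y} : Finset (Fin 7)) ⊆ t)).card
      = ∑ t ∈ G, (if x ∈ t then 2 else 0) := by
    simp only [card_filter]
    rw [Finset.sum_comm]
    refine Finset.sum_congr rfl fun t ht => ?_
    have hsub : ∀ y : Fin 7, ({x, y} : Finset (Fin 7)) ⊆ t ↔ x ∈ t ∧ y ∈ t := by
      intro y; simp [Finset.insert_subset_iff]
    by_cases hx : x ∈ t
    · simp only [hx, if_true]
      have : ∀ y ∈ (univ : Finset (Fin 7)).erase x,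
          (if ({x, y} : Finset (Fin 7)) ⊆ t then 1 else 0) = if y ∈ t then 1 else 0 := by
        intro y hy; simp [hsub y, hx]
      rw [Finset.sum_congr rfl this]
      have : ∑ y ∈ (univ : Finset (Fin 7)).erase x, (if y ∈ t then 1 else 0)
          = ((univ : Finset (Fin 7)).erase x |>.filter (fun y => y ∈ t)).card := by
        rw [card_filter]
      rw [this]
      have : ((univ : Finset (Fin 7)).erase x |>.filter (fun y => y ∈ t)) = t.erase x := by
        ext y; simp [and_comm]
      rw [this, Finset.card_erase_of_mem hx, h3 t ht]
    · simp only [hx, if_false]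
      refine Finset.sum_eq_zero fun y hy => ?_
      simp [hsub y, hx]
  have lhs : ∑ y ∈ (univ : Finset (Fin 7)).erase x,
      (G.filter (fun t => ({x, y} : Finset (Fin 7)) ⊆ t)).card = 6 * lam := by
    have : ∀ y ∈ (univ : Finset (Fin 7)).erase x,
        (G.filter (fun t => ({x, y} : Finset (Fin 7)) ⊆ t)).card = lam := by
      intro y hy
      refine hp _ ?_
      rw [Finset.card_insert_of_notMem (by simpa using (Finset.ne_of_mem_erase hy).symm),
        Finset.card_singleton]
    rw [Finset.sum_congr rfl this, Finset.sum_const, Finset.card_erase_of_mem (mem_univ x)]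
    simp [Nat.mul_comm]
  have rhs : ∑ t ∈ G, (if x ∈ t then 2 else 0)
      = 2 * (G.filter (fun t => x ∈ t)).card := by
    rw [Finset.sum_ite, Finset.sum_const, Finset.sum_const]
    simp [Nat.mul_comm]
  rw [key, rhs] at lhs
  omega

open Finset in
private lemma two_disjoint_blocks (G : Finset (Finset (Fin 7)))
    (h3 : ∀ t ∈ G, t.card = 3)
    (hp : ∀ q : Finset (Fin 7), q.card = 2 → (G.filter (fun t => q ⊆ t)).card = 2)
    (l : Finset (Fin 7)) (hl3 : l.card = 3) (hlG : l ∉ G) :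
    (G.filter (fun B => Disjoint B l)).card = 2 := by
  have hcard : G.card = 14 := design_count G 2 h3 hp
  have kl2 : ∀ B ∈ G, (B ∩ l).card ≤ 2 := by
    intro B hB
    by_contra h
    push_neg at h
    have h1 : (B ∩ l).card = 3 := le_antisymm (le_trans (card_le_card inter_subset_left) (le_of_eq (h3 B hB))) h
    have h2 : B ∩ l = B := eq_of_subset_of_card_le inter_subset_left (by rw [h1, h3 B hB])
    have h4 : B = l := eq_of_subset_of_card_le (by rw [← h2]; exact inter_subset_right) (by rw [hl3, h3 B hB])
    exact hlG (h4 ▸ hB)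
  have s1 : ∑ B ∈ G, (B ∩ l).card = 18 := by
    have e1 : ∀ B : Finset (Fin 7), (B ∩ l).card = ∑ x ∈ l, (if x ∈ B then 1 else 0) := by
      intro B
      rw [← card_filter]
      congr 1
      ext x; simp [and_comm]
    rw [Finset.sum_congr rfl (fun B _ => e1 B), Finset.sum_comm]
    have e2 : ∀ x ∈ l, ∑ B ∈ G, (if x ∈ B then 1 else 0) = 6 := by
      intro x hx
      rw [← card_filter]
      exact design_deg G 2 h3 hp x
    rw [Finset.sum_congr rfl e2, Finset.sum_const, hl3]
    rfl
  have s2 : ∑ B ∈ G, ((B ∩ l).card).choose 2 = 6 := by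
    have e1 : ∀ B : Finset (Fin 7), ((B ∩ l).card).choose 2
        = ∑ q ∈ l.powersetCard 2, (if q ⊆ B then 1 else 0) := by
      intro B
      rw [← card_filter, ← card_powersetCard]
      congr 1
      ext q
      simp only [mem_powersetCard, mem_filter, subset_inter_iff]
      tauto
    rw [Finset.sum_congr rfl (fun B _ => e1 B), Finset.sum_comm]
    have e2 : ∀ q ∈ l.powersetCard 2, ∑ B ∈ G, (if q ⊆ B then 1 else 0) = 2 := by
      intro q hq
      rw [← card_filter]
      exact hp q (mem_powersetCard.mp hq).2
    rw [Finset.sum_congr rfl e2, Finset.sum_const, card_powersetCard, hl3]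
    rfl
  have combine : ∑ B ∈ G, (1 + ((B ∩ l).card).choose 2)
      = ∑ B ∈ G, ((B ∩ l).card + (if (B ∩ l).card = 0 then 1 else 0)) := by
    refine Finset.sum_congr rfl fun B hB => ?_
    have := kl2 B hB
    interval_cases h : (B ∩ l).card <;> simp
  rw [Finset.sum_add_distrib, Finset.sum_add_distrib, Finset.sum_const, hcard, s1, s2] at combine
  have m0 : ∑ B ∈ G, (if (B ∩ l).card = 0 then 1 else 0)
      = (G.filter (fun B => Disjoint B l)).card := by
    rw [card_filter]
    refine Finset.sum_congr rfl fun B hB => ?_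
    congr 1
    simp [card_eq_zero, ← Finset.disjoint_iff_inter_eq_empty]
  rw [m0] at combine
  simp at combine
  omega

open Finset in
private lemma lines_inter_le_one (F : Finset (Finset (Fin 7)))
    (hp : ∀ q : Finset (Fin 7), q.card = 2 → (F.filter (fun t => q ⊆ t)).card = 1)
    (l m : Finset (Fin 7)) (hl : l ∈ F) (hm : m ∈ F) (hne : l ≠ m) :
    (l ∩ m).card ≤ 1 := by
  by_contra h
  push_neg at h
  obtain ⟨q, hq, hq2⟩ := Finset.exists_subset_card_eq h
  have h1 : l ∈ F.filter (fun t => q ⊆ t) :=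
    Finset.mem_filter.mpr ⟨hl, (hq.trans inter_subset_left)⟩
  have h2 : m ∈ F.filter (fun t => q ⊆ t) :=
    Finset.mem_filter.mpr ⟨hm, (hq.trans inter_subset_right)⟩
  have := hp q hq2
  have := Finset.card_le_one.mp (le_of_eq this) _ h1 _ h2
  exact hne this

open Finset in
private lemma lines_meet (F : Finset (Finset (Fin 7)))
    (h3 : ∀ t ∈ F, t.card = 3)
    (hp : ∀ q : Finset (Fin 7), q.card = 2 → (F.filter (fun t => q ⊆ t)).card = 1)
    (l m : Finset (Fin 7)) (hl : l ∈ F) (hm : m ∈ F) (hne : l ≠ m) :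
    ∃ e, l ∩ m = {e} := by
  have h1 := lines_inter_le_one F hp l m hl hm hne
  rcases Nat.lt_or_ge 0 (l ∩ m).card with h0 | h0
  · exact Finset.card_eq_one.mp (le_antisymm h1 h0)
  · exfalso
    have hdisj : l ∩ m = ∅ := Finset.card_eq_zero.mp (Nat.le_zero.mp h0)
    obtain ⟨x, hx⟩ := Finset.card_pos.mp (by rw [h3 l hl]; norm_num : 0 < l.card)
    have hxm : x ∉ m := fun hxm => by
      have : x ∈ l ∩ m := Finset.mem_inter.mpr ⟨hx, hxm⟩
      simp [hdisj] at this
    have hline : ∀ y : Fin 7, ∃ L, y ∈ m → L ∈ F ∧ ({x, y} : Finset (Fin 7)) ⊆ L := by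
      intro y
      by_cases hy : y ∈ m
      · have hxy : x ≠ y := fun h => hxm (h ▸ hy)
        have hc : ({x, y} : Finset (Fin 7)).card = 2 := by
          rw [Finset.card_insert_of_notMem (by simp [hxy]), Finset.card_singleton]
        obtain ⟨L, hL⟩ := Finset.card_eq_one.mp (hp _ hc)
        refine ⟨L, fun _ => ?_⟩
        have : L ∈ F.filter (fun t => ({x, y} : Finset (Fin 7)) ⊆ t) := by rw [hL]; simp
        exact ⟨(Finset.mem_filter.mp this).1, (Finset.mem_filter.mp this).2⟩
      · exact ⟨∅, fun h => absurd h hy⟩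
    choose f hf using hline
    have huniq : ∀ q : Finset (Fin 7), q.card = 2 → ∀ t1 ∈ F, ∀ t2 ∈ F,
        q ⊆ t1 → q ⊆ t2 → t1 = t2 := by
      intro q hq t1 ht1 t2 ht2 hs1 hs2
      have h1 : t1 ∈ F.filter (fun t => q ⊆ t) := Finset.mem_filter.mpr ⟨ht1, hs1⟩
      have h2 : t2 ∈ F.filter (fun t => q ⊆ t) := Finset.mem_filter.mpr ⟨ht2, hs2⟩
      exact Finset.card_le_one.mp (le_of_eq (hp q hq)) _ h1 _ h2
    have hpaircard : ∀ y1 y2 : Fin 7, y1 ≠ y2 → ({y1, y2} : Finset (Fin 7)).card = 2 := by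
      intro y1 y2 h
      rw [Finset.card_insert_of_notMem (by simp [h]), Finset.card_singleton]
    have hinj : Set.InjOn f m := by
      intro y1 hy1 y2 hy2 heq
      by_contra hne12
      have h1 := hf y1 hy1
      have h2 := hf y2 hy2
      have hm1 : y1 ∈ f y1 := h1.2 (Finset.mem_insert_of_mem (Finset.mem_singleton_self y1))
      have hm2 : y2 ∈ f y1 := by
        rw [heq]; exact h2.2 (Finset.mem_insert_of_mem (Finset.mem_singleton_self y2))
      have hsub : ({y1, y2} : Finset (Fin 7)) ⊆ f y1 := by
        rw [Finset.insert_subset_iff]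
        exact ⟨hm1, Finset.singleton_subset_iff.mpr hm2⟩
      have hsubm : ({y1, y2} : Finset (Fin 7)) ⊆ m := by
        rw [Finset.insert_subset_iff]
        exact ⟨hy1, Finset.singleton_subset_iff.mpr hy2⟩
      have : f y1 = m := huniq _ (hpaircard _ _ hne12) _ h1.1 _ hm hsub hsubm
      exact hxm (this ▸ h1.2 (by simp))
    have himg : m.image f ⊆ F.filter (fun t => x ∈ t) := by
      intro t ht
      obtain ⟨y, hy, rfl⟩ := Finset.mem_image.mp ht
      exact Finset.mem_filter.mpr ⟨(hf y hy).1, (hf y hy).2 (by simp)⟩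
    have hcimg : (m.image f).card = 3 := by
      rw [Finset.card_image_of_injOn hinj, h3 m hm]
    have hT : (F.filter (fun t => x ∈ t)).card = 3 := by
      have := design_deg F 1 h3 hp x; simpa using this
    have heq : m.image f = F.filter (fun t => x ∈ t) :=
      Finset.eq_of_subset_of_card_le himg (by rw [hcimg, hT])
    have hlT : l ∈ m.image f := by
      rw [heq]; exact Finset.mem_filter.mpr ⟨hl, hx⟩
    obtain ⟨y, hy, hfy⟩ := Finset.mem_image.mp hlT
    have : y ∈ l := hfy ▸ (hf y hy).2 (by simp)
    have : y ∈ l ∩ m := Finset.mem_inter.mpr ⟨this, hy⟩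
    simp [hdisj] at this

open Finset in
private lemma tri_compl (F : Finset (Finset (Fin 7)))
    (h3 : ∀ t ∈ F, t.card = 3)
    (hp : ∀ q : Finset (Fin 7), q.card = 2 → (F.filter (fun t => q ⊆ t)).card = 1)
    (t1 t2 t3 : Finset (Fin 7)) (h1 : t1 ∈ F) (h2 : t2 ∈ F) (h3' : t3 ∈ F)
    (h12 : t1 ≠ t2) (h13 : t1 ≠ t3) (h23 : t2 ≠ t3) (e : Fin 7)
    (he1 : e ∈ t1) (he2 : e ∈ t2) (he3 : e ∈ t3) :
    (t1 ∪ (t2 \ {e}))ᶜ = t3 \ {e} := by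
  have hint : ∀ ta tb : Finset (Fin 7), ta ∈ F → tb ∈ F → ta ≠ tb → e ∈ ta → e ∈ tb →
      ta ∩ tb = {e} := by
    intro ta tb ha hb hab hea heb
    refine (Finset.eq_of_subset_of_card_le ?_ ?_).symm
    · exact Finset.singleton_subset_iff.mpr (Finset.mem_inter.mpr ⟨hea, heb⟩)
    · simpa using lines_inter_le_one F hp ta tb ha hb hab
  have i12 := hint t1 t2 h1 h2 h12 he1 he2
  have i13 := hint t1 t3 h1 h3' h13 he1 he3
  have i23 := hint t2 t3 h2 h3' h23 he2 he3
  have hu12 : (t1 ∪ t2).card = 5 := by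
    have := Finset.card_union_add_card_inter t1 t2
    rw [i12, h3 t1 h1, h3 t2 h2] at this
    simpa using this
  have hiu : (t1 ∪ t2) ∩ t3 = {e} := by
    rw [Finset.union_inter_distrib_right, i13, i23]
    simp
  have hu : (t1 ∪ t2 ∪ t3).card = 7 := by
    have := Finset.card_union_add_card_inter (t1 ∪ t2) t3
    rw [hiu, hu12, h3 t3 h3'] at this
    simpa using this
  have huniv : t1 ∪ t2 ∪ t3 = (univ : Finset (Fin 7)) := by
    refine Finset.eq_of_subset_of_card_le (Finset.subset_univ _) ?_
    rw [hu]; simp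
  ext x
  simp only [Finset.mem_compl, Finset.mem_union, Finset.mem_sdiff, Finset.mem_singleton]
  constructor
  · intro h
    push_neg at h
    have hx1 : x ∉ t1 := h.1
    have hxe : x ≠ e := fun hh => hx1 (hh ▸ he1)
    have hx2 : x ∉ t2 := fun hh => hxe (h.2 hh)
    have hx3 : x ∈ t3 := by
      have : x ∈ t1 ∪ t2 ∪ t3 := huniv ▸ Finset.mem_univ x
      simp only [Finset.mem_union] at this
      tauto
    exact ⟨hx3, hxe⟩
  · rintro ⟨hx3, hxe⟩
    push_neg
    constructor
    · intro hx1
      have : x ∈ t1 ∩ t3 := Finset.mem_inter.mpr ⟨hx1, hx3⟩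
      rw [i13] at this
      exact hxe (Finset.mem_singleton.mp this)
    · intro hx2
      exfalso
      have : x ∈ t2 ∩ t3 := Finset.mem_inter.mpr ⟨hx2, hx3⟩
      rw [i23] at this
      exact hxe (Finset.mem_singleton.mp this)

open Finset in
private lemma exists_pair (G : Finset (Finset (Fin 7)))
    (h3 : ∀ t ∈ G, t.card = 3)
    (hp : ∀ q : Finset (Fin 7), q.card = 2 → (G.filter (fun t => q ⊆ t)).card = 2)
    (l : Finset (Fin 7)) (hl3 : l.card = 3) (hlG : l ∉ G) :
    ∃ p : Finset (Fin 7), p.card = 2 ∧ Disjoint p l ∧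
      (∀ B ∈ G, Disjoint B l → p ⊆ B) ∧ (∀ B ∈ G, p ⊆ B → Disjoint B l) := by
  obtain ⟨C1, C2, hC12, hfeq⟩ := Finset.card_eq_two.mp (two_disjoint_blocks G h3 hp l hl3 hlG)
  have hC1 : C1 ∈ G.filter (fun B => Disjoint B l) := by rw [hfeq]; simp
  have hC2 : C2 ∈ G.filter (fun B => Disjoint B l) := by rw [hfeq]; simp
  obtain ⟨hC1G, hC1d⟩ := Finset.mem_filter.mp hC1
  obtain ⟨hC2G, hC2d⟩ := Finset.mem_filter.mp hC2
  have hsubc : ∀ B : Finset (Fin 7), Disjoint B l → B ⊆ lᶜ := by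
    intro B hd
    intro x hx
    simp only [Finset.mem_compl]
    exact Finset.disjoint_left.mp hd hx
  have hclc : (lᶜ : Finset (Fin 7)).card = 4 := by
    rw [Finset.card_compl, hl3]; rfl
  have hucard : (C1 ∪ C2).card = 4 := by
    have hle : (C1 ∪ C2).card ≤ 4 := by
      calc (C1 ∪ C2).card ≤ (lᶜ : Finset (Fin 7)).card :=
            Finset.card_le_card (Finset.union_subset (hsubc _ hC1d) (hsubc _ hC2d))
        _ = 4 := hclc
    have hge : 4 ≤ (C1 ∪ C2).card := by
      by_contra hh
      push_neg at hh
      have : C1 ⊆ C1 ∪ C2 := Finset.subset_union_left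
      have h1 : (C1 ∪ C2).card = 3 := le_antisymm (by omega)
        (by calc 3 = C1.card := (h3 C1 hC1G).symm
              _ ≤ _ := Finset.card_le_card this)
      have e1 : C1 = C1 ∪ C2 := Finset.eq_of_subset_of_card_le this (by rw [h1, h3 C1 hC1G])
      have e2 : C2 = C1 ∪ C2 := Finset.eq_of_subset_of_card_le Finset.subset_union_right
        (by rw [h1, h3 C2 hC2G])
      exact hC12 (e1.trans e2.symm)
    omega
  have hicard : (C1 ∩ C2).card = 2 := by
    have := Finset.card_union_add_card_inter C1 C2
    rw [hucard, h3 C1 hC1G, h3 C2 hC2G] at this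
    omega
  refine ⟨C1 ∩ C2, hicard, ?_, ?_, ?_⟩
  · exact Finset.disjoint_of_subset_left Finset.inter_subset_left hC1d
  · intro B hBG hBd
    have : B ∈ G.filter (fun B => Disjoint B l) := Finset.mem_filter.mpr ⟨hBG, hBd⟩
    rw [hfeq] at this
    rcases Finset.mem_insert.mp this with h | h
    · subst h; exact Finset.inter_subset_left
    · rw [Finset.mem_singleton.mp h]; exact Finset.inter_subset_right
  · intro B hBG hBsub
    have hfil2 : (G.filter (fun t => C1 ∩ C2 ⊆ t)).card = 2 := hp _ hicard
    have hsub2 : ({C1, C2} : Finset (Finset (Fin 7))) ⊆ G.filter (fun t => C1 ∩ C2 ⊆ t) := by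
      intro t ht
      rcases Finset.mem_insert.mp ht with h | h
      · subst h; exact Finset.mem_filter.mpr ⟨hC1G, Finset.inter_subset_left⟩
      · rw [Finset.mem_singleton.mp h]
        exact Finset.mem_filter.mpr ⟨hC2G, Finset.inter_subset_right⟩
    have heq2 : ({C1, C2} : Finset (Finset (Fin 7))) = G.filter (fun t => C1 ∩ C2 ⊆ t) :=
      Finset.eq_of_subset_of_card_le hsub2 (by rw [hfil2, Finset.card_insert_of_notMem (by simp [hC12]), Finset.card_singleton])
    have : B ∈ ({C1, C2} : Finset (Finset (Fin 7))) := by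
      rw [heq2]; exact Finset.mem_filter.mpr ⟨hBG, hBsub⟩
    rcases Finset.mem_insert.mp this with h | h
    · subst h; exact hC1d
    · rw [Finset.mem_singleton.mp h]; exact hC2d

open Finset in
private lemma pair_relation (G : Finset (Finset (Fin 7)))
    (h3 : ∀ t ∈ G, t.card = 3)
    (hp : ∀ q : Finset (Fin 7), q.card = 2 → (G.filter (fun t => q ⊆ t)).card = 2)
    (l m : Finset (Fin 7)) (hl3 : l.card = 3) (hm3 : m.card = 3)
    (hlm : (l ∩ m).card ≤ 1) (hne : l ≠ m) (hmG : m ∉ G)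
    (pl pm : Finset (Fin 7))
    (hpl2 : pl.card = 2) (hpm2 : pm.card = 2)
    (hpl_prop : ∀ B ∈ G, pl ⊆ B → Disjoint B l)
    (hpm_prop : ∀ B ∈ G, Disjoint B m → pm ⊆ B)
    (hdisj : Disjoint pl m) :
    pm = (m ∪ pl)ᶜ := by
  obtain ⟨C1, C2, hC12, hfeq⟩ := Finset.card_eq_two.mp (two_disjoint_blocks G h3 hp m hm3 hmG)
  have hC1 : C1 ∈ G.filter (fun B => Disjoint B m) := by rw [hfeq]; simp
  have hC2 : C2 ∈ G.filter (fun B => Disjoint B m) := by rw [hfeq]; simp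
  obtain ⟨hC1G, hC1d⟩ := Finset.mem_filter.mp hC1
  obtain ⟨hC2G, hC2d⟩ := Finset.mem_filter.mp hC2
  have hsubc : ∀ B : Finset (Fin 7), Disjoint B m → B ⊆ mᶜ := by
    intro B hd x hx
    simp only [Finset.mem_compl]
    exact Finset.disjoint_left.mp hd hx
  have hclc : (mᶜ : Finset (Fin 7)).card = 4 := by
    rw [Finset.card_compl, hm3]; rfl
  have hplc : pl ⊆ mᶜ := by
    intro x hx
    simp only [Finset.mem_compl]
    exact Finset.disjoint_left.mp hdisj hx
  -- ¬ pl ⊆ Ci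
  have hnotsub : ∀ C : Finset (Fin 7), C ∈ G → Disjoint C m → ¬ pl ⊆ C := by
    intro C hCG hCd hsub
    have hCl : Disjoint C l := hpl_prop C hCG hsub
    have hCu : C ⊆ (l ∪ m)ᶜ := by
      intro x hx
      simp only [Finset.mem_compl, Finset.mem_union]
      push_neg
      exact ⟨Finset.disjoint_left.mp hCl hx, Finset.disjoint_left.mp hCd hx⟩
    have hlu : 5 ≤ (l ∪ m).card := by
      have := Finset.card_union_add_card_inter l m
      omega
    have : (( l ∪ m)ᶜ : Finset (Fin 7)).card ≤ 2 := by
      rw [Finset.card_compl]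
      have h7 : Fintype.card (Fin 7) = 7 := by simp
      omega
    have : C.card ≤ 2 := le_trans (Finset.card_le_card hCu) this
    rw [h3 C hCG] at this
    omega
  -- obtain ci
  have hgetc : ∀ C : Finset (Fin 7), C ∈ G → Disjoint C m → ∃ c, c ∈ pl ∧ C = mᶜ \ {c} := by
    intro C hCG hCd
    obtain ⟨c, hc, hcC⟩ := Finset.not_subset.mp (hnotsub C hCG hCd)
    refine ⟨c, hc, ?_⟩
    have hsub : C ⊆ mᶜ \ {c} := by
      intro x hx
      simp only [Finset.mem_sdiff, Finset.mem_singleton]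
      exact ⟨hsubc C hCd hx, fun h => hcC (h ▸ hx)⟩
    refine Finset.eq_of_subset_of_card_le hsub ?_
    rw [Finset.card_sdiff_of_subset (by simpa using hplc hc), hclc, h3 C hCG]
    simp
  obtain ⟨c1, hc1, hc1eq⟩ := hgetc C1 hC1G hC1d
  obtain ⟨c2, hc2, hc2eq⟩ := hgetc C2 hC2G hC2d
  have hcne : c1 ≠ c2 := by
    intro h
    exact hC12 (by rw [hc1eq, hc2eq, h])
  have hpleq : pl = {c1, c2} := by
    refine (Finset.eq_of_subset_of_card_le ?_ ?_).symm
    · intro x hx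
      rcases Finset.mem_insert.mp hx with h | h
      · exact h ▸ hc1
      · exact (Finset.mem_singleton.mp h) ▸ hc2
    · rw [hpl2, Finset.card_insert_of_notMem (by simp [hcne]), Finset.card_singleton]
  have hpmsub : pm ⊆ C1 ∩ C2 := Finset.subset_inter (hpm_prop C1 hC1G hC1d) (hpm_prop C2 hC2G hC2d)
  have hicard : (C1 ∩ C2).card = 2 := by
    rw [hc1eq, hc2eq]
    have : (mᶜ \ {c1}) ∩ (mᶜ \ {c2}) = mᶜ \ {c1, c2} := by
      ext x
      simp only [Finset.mem_inter, Finset.mem_sdiff, Finset.mem_singleton, Finset.mem_insert]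
      tauto
    rw [this, Finset.card_sdiff_of_subset ?_, hclc]
    · rw [Finset.card_insert_of_notMem (by simp [hcne]), Finset.card_singleton]
    · rw [← hpleq]; exact hplc
  have hpmeq : pm = C1 ∩ C2 := Finset.eq_of_subset_of_card_le hpmsub (by rw [hicard, hpm2])
  rw [hpmeq, hc1eq, hc2eq]
  ext x
  simp only [Finset.mem_inter, Finset.mem_sdiff, Finset.mem_singleton, Finset.mem_compl,
    Finset.mem_union, hpleq, Finset.mem_insert]
  tauto

/-- A simple 2-(7,3,λ) design: a set of distinct 3-subsets of `Fin 7` such that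
every 2-subset lies in exactly `lam` blocks. -/
def IsDesign (lam : ℕ) (D : Finset (Finset (Fin 7))) : Prop :=
  (∀ t ∈ D, t.card = 3) ∧
    ∀ p : Finset (Fin 7), p.card = 2 → (D.filter (fun t => p ⊆ t)).card = lam

/-- no simple 2-(7,3,3) design contains a Fano plane. -/
theorem no_fano_in_2_7_3_3 (D : Finset (Finset (Fin 7)))
    (hD : IsDesign 3 D) (hcard : D.card = 21) :
    ∀ F ⊆ D, ¬ IsDesign 1 F := by
  rintro F hFD ⟨hF3, hFpair⟩
  obtain ⟨hD3, hDpair⟩ := hD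
  set G := D \ F with hGdef
  have hG3 : ∀ t ∈ G, t.card = 3 := fun t ht => hD3 t (Finset.mem_sdiff.mp ht).1
  have hGpair : ∀ q : Finset (Fin 7), q.card = 2 →
      (G.filter (fun t => q ⊆ t)).card = 2 := by
    intro q hq
    have heq : G.filter (fun t => q ⊆ t)
        = (D.filter (fun t => q ⊆ t)) \ (F.filter (fun t => q ⊆ t)) := by
      ext t
      simp only [Finset.mem_filter, Finset.mem_sdiff, hGdef]
      tauto
    rw [heq, Finset.card_sdiff_of_subset (Finset.filter_subset_filter _ hFD), hDpair q hq, hFpair q hq]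
  have hFnotG : ∀ l ∈ F, l ∉ G := by
    intro l hl hlG
    exact (Finset.mem_sdiff.mp hlG).2 hl
  have hdegF : ∀ x : Fin 7, (F.filter (fun t => x ∈ t)).card = 3 := by
    intro x
    simpa using design_deg F 1 hF3 hFpair x
  -- choose the pair P l for each line l
  have hPex : ∀ l : Finset (Fin 7), ∃ p : Finset (Fin 7), l ∈ F →
      (p.card = 2 ∧ Disjoint p l ∧
        (∀ B ∈ G, Disjoint B l → p ⊆ B) ∧ (∀ B ∈ G, p ⊆ B → Disjoint B l)) := by
    intro l
    by_cases hl : l ∈ F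
    · obtain ⟨p, hp⟩ := exists_pair G hG3 hGpair l (hF3 l hl) (hFnotG l hl)
      exact ⟨p, fun _ => hp⟩
    · exact ⟨∅, fun h => absurd h hl⟩
  choose P hP using hPex
  -- choose the unique line through each pair
  have hNLex : ∀ q : Finset (Fin 7), ∃ n : Finset (Fin 7), q.card = 2 →
      F.filter (fun t => q ⊆ t) = {n} := by
    intro q
    by_cases hq : q.card = 2
    · obtain ⟨n, hn⟩ := Finset.card_eq_one.mp (hFpair q hq)
      exact ⟨n, fun _ => hn⟩
    · exact ⟨∅, fun h => absurd h hq⟩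
  choose NL hNL using hNLex
  have hNLmem : ∀ q : Finset (Fin 7), q.card = 2 → NL q ∈ F ∧ q ⊆ NL q := by
    intro q hq
    have : NL q ∈ F.filter (fun t => q ⊆ t) := by rw [hNL q hq]; simp
    exact ⟨(Finset.mem_filter.mp this).1, (Finset.mem_filter.mp this).2⟩
  have hNLuniq : ∀ q : Finset (Fin 7), q.card = 2 → ∀ t ∈ F, q ⊆ t → t = NL q := by
    intro q hq t ht hsub
    have : t ∈ F.filter (fun t => q ⊆ t) := Finset.mem_filter.mpr ⟨ht, hsub⟩
    rw [hNL q hq] at this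
    exact Finset.mem_singleton.mp this
  -- choose E l
  have hEex : ∀ l : Finset (Fin 7), ∃ e : Fin 7, l ∈ F →
      (NL (P l)) \ (P l) = {e} := by
    intro l
    by_cases hl : l ∈ F
    · have hP2 := (hP l hl).1
      obtain ⟨hNF, hPN⟩ := hNLmem (P l) hP2
      have : ((NL (P l)) \ (P l)).card = 1 := by
        rw [Finset.card_sdiff_of_subset hPN, hF3 _ hNF, hP2]
      obtain ⟨e, he⟩ := Finset.card_eq_one.mp this
      exact ⟨e, fun _ => he⟩
    · exact ⟨0, fun h => absurd h hl⟩
  choose E hE using hEex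
  -- basic facts about N, E
  have hNF : ∀ l ∈ F, NL (P l) ∈ F := fun l hl => (hNLmem _ (hP l hl).1).1
  have hPN : ∀ l ∈ F, P l ⊆ NL (P l) := fun l hl => (hNLmem _ (hP l hl).1).2
  have hEmemN : ∀ l ∈ F, E l ∈ NL (P l) := by
    intro l hl
    have : E l ∈ (NL (P l)) \ (P l) := by rw [hE l hl]; simp
    exact (Finset.mem_sdiff.mp this).1
  have hEnotP : ∀ l ∈ F, E l ∉ P l := by
    intro l hl
    have : E l ∈ (NL (P l)) \ (P l) := by rw [hE l hl]; simp
    exact (Finset.mem_sdiff.mp this).2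
  have hPeq : ∀ l ∈ F, P l = (NL (P l)) \ {E l} := by
    intro l hl
    have hsub : P l ⊆ (NL (P l)) \ {E l} := by
      intro x hx
      simp only [Finset.mem_sdiff, Finset.mem_singleton]
      exact ⟨hPN l hl hx, fun h => hEnotP l hl (h ▸ hx)⟩
    refine Finset.eq_of_subset_of_card_le hsub ?_
    rw [Finset.card_sdiff_of_subset (Finset.singleton_subset_iff.mpr (hEmemN l hl)),
      hF3 _ (hNF l hl), (hP l hl).1]
    simp
  have hlneN : ∀ l ∈ F, l ≠ NL (P l) := by
    intro l hl heq
    have hP2 := (hP l hl).1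
    have hdisj := (hP l hl).2.1
    have h2 : P l ⊆ NL (P l) := hPN l hl
    rw [← heq] at h2
    have hne : (P l).Nonempty := Finset.card_pos.mp (by rw [hP2]; norm_num)
    obtain ⟨x, hx⟩ := hne
    exact Finset.disjoint_left.mp hdisj hx (h2 hx)
  have hEl : ∀ l ∈ F, E l ∈ l := by
    intro l hl
    obtain ⟨z, hz⟩ := lines_meet F hF3 hFpair l (NL (P l)) hl (hNF l hl) (hlneN l hl)
    have hzl : z ∈ l := by
      have : z ∈ l ∩ NL (P l) := by rw [hz]; simp
      exact (Finset.mem_inter.mp this).1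
    have hzN : z ∈ NL (P l) := by
      have : z ∈ l ∩ NL (P l) := by rw [hz]; simp
      exact (Finset.mem_inter.mp this).2
    have hzP : z ∉ P l := fun h => Finset.disjoint_left.mp (hP l hl).2.1 h hzl
    have : z ∈ (NL (P l)) \ (P l) := Finset.mem_sdiff.mpr ⟨hzN, hzP⟩
    rw [hE l hl] at this
    rw [← Finset.mem_singleton.mp this]
    exact hzl
  -- choose M l : the third line through E l
  have hMex : ∀ l : Finset (Fin 7), ∃ m : Finset (Fin 7), l ∈ F →
      (m ∈ F ∧ E l ∈ m ∧ m ≠ l ∧ m ≠ NL (P l) ∧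
        F.filter (fun t => E l ∈ t) = {NL (P l), l, m}) := by
    intro l
    by_cases hl : l ∈ F
    · have hfil3 : (F.filter (fun t => E l ∈ t)).card = 3 := hdegF (E l)
      have hNin : NL (P l) ∈ F.filter (fun t => E l ∈ t) :=
        Finset.mem_filter.mpr ⟨hNF l hl, hEmemN l hl⟩
      have hlin : l ∈ F.filter (fun t => E l ∈ t) :=
        Finset.mem_filter.mpr ⟨hl, hEl l hl⟩
      have hsub2 : ({NL (P l), l} : Finset (Finset (Fin 7))) ⊆ F.filter (fun t => E l ∈ t) := by
        intro t ht
        rcases Finset.mem_insert.mp ht with h | h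
        · exact h ▸ hNin
        · exact (Finset.mem_singleton.mp h) ▸ hlin
      have hc2 : ({NL (P l), l} : Finset (Finset (Fin 7))).card = 2 := by
        rw [Finset.card_insert_of_notMem (by simp [(hlneN l hl).symm]), Finset.card_singleton]
      have hc1 : ((F.filter (fun t => E l ∈ t)) \ {NL (P l), l}).card = 1 := by
        rw [Finset.card_sdiff_of_subset hsub2, hfil3, hc2]
      obtain ⟨m, hm⟩ := Finset.card_eq_one.mp hc1
      have hmmem : m ∈ (F.filter (fun t => E l ∈ t)) \ {NL (P l), l} := by rw [hm]; simp
      obtain ⟨hmf, hmnot⟩ := Finset.mem_sdiff.mp hmmem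
      simp only [Finset.mem_insert, Finset.mem_singleton, not_or] at hmnot
      refine ⟨m, fun _ => ⟨(Finset.mem_filter.mp hmf).1, (Finset.mem_filter.mp hmf).2,
        hmnot.2, hmnot.1, ?_⟩⟩
      have : F.filter (fun t => E l ∈ t)
          = ({NL (P l), l} : Finset (Finset (Fin 7))) ∪ ((F.filter (fun t => E l ∈ t)) \ {NL (P l), l}) := by
        rw [Finset.union_sdiff_of_subset hsub2]
      rw [this, hm]
      ext t
      simp only [Finset.mem_union, Finset.mem_insert, Finset.mem_singleton]
      tauto
    · exact ⟨∅, fun h => absurd h hl⟩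
  choose M hM using hMex
  -- KEY lemma
  have KEY : ∀ l ∈ F, P (M l) = l \ {E l} ∧ NL (P (M l)) = l ∧ E (M l) = E l ∧
      M (M l) = NL (P l) := by
    intro l hl
    obtain ⟨hmF, hEm, hmne_l, hmne_n, hfil⟩ := hM l hl
    set m := M l
    set n := NL (P l)
    set e := E l
    have hnF : n ∈ F := hNF l hl
    have hinter_mn : m ∩ n = {e} := by
      refine (Finset.eq_of_subset_of_card_le ?_ ?_).symm
      · exact Finset.singleton_subset_iff.mpr (Finset.mem_inter.mpr ⟨hEm, hEmemN l hl⟩)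
      · simpa using lines_inter_le_one F hFpair m n hmF hnF hmne_n
    have hdisjPm : Disjoint (P l) m := by
      rw [Finset.disjoint_left]
      intro x hx hxm
      have hxn : x ∈ n := hPN l hl hx
      have : x ∈ m ∩ n := Finset.mem_inter.mpr ⟨hxm, hxn⟩
      rw [hinter_mn] at this
      have hxe : x = e := Finset.mem_singleton.mp this
      subst hxe
      exact hEnotP l hl hx
    have hPm : P m = (m ∪ P l)ᶜ := by
      refine pair_relation G hG3 hGpair l m (hF3 l hl) (hF3 m hmF) ?_ (Ne.symm hmne_l)
        (hFnotG m hmF) (P l) (P m) (hP l hl).1 (hP m hmF).1 (hP l hl).2.2.2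
        (hP m hmF).2.2.1 hdisjPm
      exact lines_inter_le_one F hFpair l m hl hmF (Ne.symm hmne_l)
    have hPmeq : P m = l \ {e} := by
      rw [hPm, hPeq l hl]
      exact tri_compl F hF3 hFpair m n l hmF hnF hl hmne_n hmne_l (hlneN l hl).symm e
        hEm (hEmemN l hl) (hEl l hl)
    have hNm : NL (P m) = l := by
      refine (hNLuniq (P m) (hP m hmF).1 l hl ?_).symm
      rw [hPmeq]
      exact Finset.sdiff_subset
    have hEmeq : E m = e := by
      have h1 : (NL (P m)) \ (P m) = {E m} := hE m hmF
      rw [hNm, hPmeq] at h1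
      have h2 : l \ (l \ {e}) = {e} := by
        rw [Finset.sdiff_sdiff_self_left]
        exact Finset.inter_eq_right.mpr (Finset.singleton_subset_iff.mpr (hEl l hl))
      rw [h2] at h1
      exact (Finset.singleton_injective h1).symm
    have hMm : M m = n := by
      obtain ⟨hm'F, hEm', hm'ne_m, hm'ne_N, hfil'⟩ := hM m hmF
      have hMmFil : M m ∈ F.filter (fun t => e ∈ t) := by
        refine Finset.mem_filter.mpr ⟨hm'F, ?_⟩
        rw [← hEmeq]; exact hEm'
      rw [hfil] at hMmFil
      simp only [Finset.mem_insert, Finset.mem_singleton] at hMmFil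
      rcases hMmFil with h | h | h
      · exact h
      · exact absurd (h.trans hNm.symm) hm'ne_N
      · exact absurd h hm'ne_m
    exact ⟨hPmeq, hNm, hEmeq, hMm⟩
  -- P1: fibers
  have P1 : ∀ l ∈ F, ∀ t ∈ F, E l ∈ t → E t = E l := by
    intro l hl t ht hEt
    obtain ⟨hmF, hEm, hmne_l, hmne_n, hfil⟩ := hM l hl
    have : t ∈ F.filter (fun s => E l ∈ s) := Finset.mem_filter.mpr ⟨ht, hEt⟩
    rw [hfil] at this
    simp only [Finset.mem_insert, Finset.mem_singleton] at this
    rcases this with h | h | h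
    · -- t = NL (P l) = M (M l)
      obtain ⟨_, _, hEMl, hMMl⟩ := KEY l hl
      obtain ⟨_, _, hEMMl, _⟩ := KEY (M l) hmF
      rw [h, ← hMMl, hEMMl, hEMl]
    · rw [h]
    · rw [h, (KEY l hl).2.2.1]
  -- final count
  have hF7 : F.card = 7 := by simpa using design_count F 1 hF3 hFpair
  have hfib := Finset.card_eq_sum_card_fiberwise
    (f := E) (s := F) (t := F.image E) (fun x hx => Finset.mem_image_of_mem E hx)
  have hfib3 : ∀ z ∈ F.image E, (F.filter (fun t => E t = z)).card = 3 := by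
    intro z hz
    obtain ⟨l0, hl0, rfl⟩ := Finset.mem_image.mp hz
    have : F.filter (fun t => E t = E l0) = F.filter (fun t => E l0 ∈ t) := by
      ext t
      simp only [Finset.mem_filter, and_congr_right_iff]
      intro ht
      constructor
      · intro h; rw [← h]; exact hEl t ht
      · intro h; exact P1 l0 hl0 t ht h
    rw [this, hdegF]
  rw [Finset.sum_congr rfl hfib3, Finset.sum_const, hF7, smul_eq_mul] at hfib
  omega
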